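/- For f ∈ ℓ²(ℕ) real or complex with a(f) = ∑ₖ f̄ₖ aₖ and a†(f) = ∑ₖ fₖ aₖ†, the commutator [a(f), a†(f)] acts on each occupancy-number basis vector |n⟩ of the Bose–Fock space as multiplication by ‖f‖²: [a(f), a†(f)] |n⟩ = ‖f‖² |n⟩. -/

import Mathlib

/-- The occupancy-number basis vector `|n⟩` of the Bose–Fock space
(as a coefficient function over occupancy configurations). -/
def fockBasis (n : ℕ →₀ ℕ) : (ℕ →₀ ℕ) → ℂ := fun m => if m = n then 1 else 0

/-- The smeared annihilation operator `a(f) = ∑ₖ f̄ₖ aₖ`, acting on coefficient functions: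
`(a(f)ψ)(m) = ∑ₖ f̄ₖ √(mₖ+1) ψ(m + δₖ)`, corresponding to `aₖ|n⟩ = √nₖ |n(nₖ→nₖ−1)⟩`. -/
noncomputable def fockAnn (f : ℕ → ℂ) (ψ : (ℕ →₀ ℕ) → ℂ) : (ℕ →₀ ℕ) → ℂ :=
  fun m => ∑' k : ℕ,
    (starRingEnd ℂ) (f k) * (Real.sqrt ((m k : ℝ) + 1) : ℂ) * ψ (m + Finsupp.single k 1)

/-- The smeared creation operator `a†(f) = ∑ₖ fₖ aₖ†`, acting on coefficient functions:
`(a†(f)ψ)(m) = ∑ₖ fₖ √mₖ ψ(m − δₖ)`, corresponding to `aₖ†|n⟩ = √(nₖ+1) |n(nₖ→nₖ+1)⟩`. -/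
noncomputable def fockCre (f : ℕ → ℂ) (ψ : (ℕ →₀ ℕ) → ℂ) : (ℕ →₀ ℕ) → ℂ :=
  fun m => ∑' k : ℕ, f k * (Real.sqrt (m k : ℝ) : ℂ) * ψ (m - Finsupp.single k 1)

lemma finsuppEq_iff (p q : ℕ →₀ ℕ) : p = q ↔ ∀ i, p i = q i := by
  constructor
  · intro h i; rw [h]
  · intro h; ext i; exact h i

lemma add_single_apply (p : ℕ →₀ ℕ) (j i : ℕ) :
    ((p + Finsupp.single j 1 : ℕ →₀ ℕ)) i = p i + if j = i then 1 else 0 := by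
  rw [Finsupp.add_apply, Finsupp.single_apply]

lemma sub_single_apply (p : ℕ →₀ ℕ) (j i : ℕ) :
    ((p - Finsupp.single j 1 : ℕ →₀ ℕ)) i = p i - if j = i then 1 else 0 := by
  rw [Finsupp.tsub_apply, Finsupp.single_apply]

lemma cre_basis_at (f : ℕ → ℂ) (n : ℕ →₀ ℕ) (j : ℕ) :
    fockCre f (fockBasis n) (n + Finsupp.single j 1)
      = f j * (Real.sqrt ((n j : ℝ) + 1) : ℂ) := by
  unfold fockCre fockBasis
  rw [tsum_eq_single j ?_]
  · have h1 : ((n + Finsupp.single j 1 : ℕ →₀ ℕ)) j = n j + 1 := by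
      rw [add_single_apply, if_pos rfl]
    have h2 : n + Finsupp.single j 1 - Finsupp.single j 1 = n := by
      ext i
      rw [sub_single_apply, add_single_apply]
      omega
    rw [h1, h2]
    simp
  · intro j' hj'
    by_cases h0 : n j' = 0
    · have h3 : ((n + Finsupp.single j 1 : ℕ →₀ ℕ)) j' = 0 := by
        rw [add_single_apply, if_neg (Ne.symm hj'), h0]
      rw [h3]; simp
    · have hne : n + Finsupp.single j 1 - Finsupp.single j' 1 ≠ n := by
        intro hEq
        have h4 := (finsuppEq_iff _ _).mp hEq j'
        rw [sub_single_apply, add_single_apply, if_pos rfl, if_neg (Ne.symm hj')] at h4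
        omega
      simp [hne]

lemma cre_basis_zero (f : ℕ → ℂ) (n : ℕ →₀ ℕ) (p : ℕ →₀ ℕ)
    (h : ∀ j, p ≠ n + Finsupp.single j 1) :
    fockCre f (fockBasis n) p = 0 := by
  unfold fockCre fockBasis
  have hterm : ∀ k : ℕ,
      f k * (Real.sqrt (p k : ℝ) : ℂ) * (if (p - Finsupp.single k 1) = n then 1 else 0) = 0 := by
    intro k
    by_cases h0 : p k = 0
    · rw [h0]; simp
    · have hne : p - Finsupp.single k 1 ≠ n := by
        intro hEq
        apply h k
        ext i
        have h4 := (finsuppEq_iff _ _).mp hEq i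
        rw [sub_single_apply] at h4
        rw [add_single_apply]
        by_cases hik : k = i
        · subst hik; rw [if_pos rfl] at h4 ⊢; omega
        · rw [if_neg hik] at h4 ⊢; omega
      simp [hne]
  calc (∑' k : ℕ, f k * (Real.sqrt (p k : ℝ) : ℂ) * (if (p - Finsupp.single k 1) = n then 1 else 0))
      = ∑' _ : ℕ, (0:ℂ) := tsum_congr hterm
    _ = 0 := tsum_zero

lemma ann_basis_at (f : ℕ → ℂ) (n : ℕ →₀ ℕ) (k : ℕ) (hk : n k ≠ 0) :
    fockAnn f (fockBasis n) (n - Finsupp.single k 1)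
      = (starRingEnd ℂ) (f k) * (Real.sqrt (n k : ℝ) : ℂ) := by
  unfold fockAnn fockBasis
  rw [tsum_eq_single k ?_]
  · have h1 : ((n - Finsupp.single k 1 : ℕ →₀ ℕ)) k = n k - 1 := by
      rw [sub_single_apply, if_pos rfl]
    have h2 : n - Finsupp.single k 1 + Finsupp.single k 1 = n := by
      ext i
      rw [add_single_apply, sub_single_apply]
      by_cases hik : k = i
      · subst hik; simp; omega
      · simp [hik]
    rw [h1, h2]
    have h3 : ((n k - 1 : ℕ) : ℝ) + 1 = (n k : ℝ) := by
      ring_nf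
      rw [Nat.cast_sub (Nat.one_le_iff_ne_zero.mpr hk)]
      ring
    rw [h3]
    simp
  · intro k' hk'
    have hne : n - Finsupp.single k 1 + Finsupp.single k' 1 ≠ n := by
      intro hEq
      have h4 := (finsuppEq_iff _ _).mp hEq k
      rw [add_single_apply, sub_single_apply, if_pos rfl, if_neg hk'] at h4
      omega
    simp [hne]

lemma ann_basis_zero (f : ℕ → ℂ) (n : ℕ →₀ ℕ) (p : ℕ →₀ ℕ)
    (h : ∀ k, p + Finsupp.single k 1 ≠ n) :
    fockAnn f (fockBasis n) p = 0 := by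
  unfold fockAnn fockBasis
  have hterm : ∀ k : ℕ,
      (starRingEnd ℂ) (f k) * (Real.sqrt ((p k : ℝ) + 1) : ℂ) *
        (if (p + Finsupp.single k 1) = n then 1 else 0) = 0 := by
    intro k; simp [h k]
  calc (∑' k : ℕ, (starRingEnd ℂ) (f k) * (Real.sqrt ((p k : ℝ) + 1) : ℂ) *
        (if (p + Finsupp.single k 1) = n then 1 else 0))
      = ∑' _ : ℕ, (0:ℂ) := tsum_congr hterm
    _ = 0 := tsum_zero

lemma pair_unique {m n : ℕ →₀ ℕ} (hmn : m ≠ n) {k j k' j' : ℕ}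
    (h1 : m + Finsupp.single k 1 = n + Finsupp.single j 1)
    (h2 : m + Finsupp.single k' 1 = n + Finsupp.single j' 1) : k = k' ∧ j = j' := by
  have hkj : k ≠ j := by rintro rfl; exact hmn (add_right_cancel h1)
  have hkj' : k' ≠ j' := by rintro rfl; exact hmn (add_right_cancel h2)
  have p1 : ∀ i, m i + (if k = i then 1 else 0) = n i + (if j = i then 1 else 0) := by
    intro i
    have := (finsuppEq_iff _ _).mp h1 i
    rwa [add_single_apply, add_single_apply] at this
  have p2 : ∀ i, m i + (if k' = i then 1 else 0) = n i + (if j' = i then 1 else 0) := by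
    intro i
    have := (finsuppEq_iff _ _).mp h2 i
    rwa [add_single_apply, add_single_apply] at this
  have hkk : k = k' := by
    by_contra hne
    have a1 := p1 k
    have a2 := p2 k
    rw [if_pos rfl, if_neg (Ne.symm hkj)] at a1
    rw [if_neg (fun h => hne (Eq.symm h))] at a2
    by_cases hj'k : j' = k
    · rw [if_pos hj'k] at a2; omega
    · rw [if_neg hj'k] at a2; omega
  refine ⟨hkk, ?_⟩
  subst hkk
  have h3 : (Finsupp.single j 1 : ℕ →₀ ℕ) = Finsupp.single j' 1 := by
    have := h1.symm.trans h2
    exact add_left_cancel this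
  by_contra hne
  have h4 := (finsuppEq_iff _ _).mp h3 j
  rw [Finsupp.single_apply, Finsupp.single_apply, if_pos rfl,
    if_neg (fun h => hne (Eq.symm h))] at h4
  omega

/-- From `m - δⱼ + δₖ = n` with `m j ≥ 1`, deduce `m + δₖ = n + δⱼ`. -/
lemma sub_add_eq {m n : ℕ →₀ ℕ} {j k : ℕ} (h0 : m j ≠ 0)
    (hk : m - Finsupp.single j 1 + Finsupp.single k 1 = n) :
    m + Finsupp.single k 1 = n + Finsupp.single j 1 := by
  ext i
  rw [add_single_apply, add_single_apply]
  have h := (finsuppEq_iff _ _).mp hk i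
  rw [add_single_apply, sub_single_apply] at h
  by_cases h2 : j = i
  · subst h2
    by_cases h1 : k = j
    · subst h1; simp at h ⊢ <;> omega
    · simp [h1] at h ⊢ <;> omega
  · by_cases h1 : k = i
    · subst h1; simp [h2] at h ⊢ <;> omega
    · simp [h1, h2] at h ⊢ <;> omega

/-- From `m + δₖ = n + δⱼ` with `k ≠ j`, deduce `m - δⱼ = n - δₖ`. -/
lemma sub_eq_sub {m n : ℕ →₀ ℕ} {k j : ℕ} (hkj : k ≠ j)
    (hp : m + Finsupp.single k 1 = n + Finsupp.single j 1) :
    m - Finsupp.single j 1 = n - Finsupp.single k 1 := by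
  ext i
  rw [sub_single_apply, sub_single_apply]
  have h := (finsuppEq_iff _ _).mp hp i
  rw [add_single_apply, add_single_apply] at h
  by_cases h1 : k = i
  · subst h1; simp [Ne.symm hkj] at h ⊢ <;> omega
  · by_cases h2 : j = i
    · subst h2; simp [h1] at h ⊢ <;> omega
    · simp [h1, h2] at h ⊢ <;> omega

/-- **Canonical commutation relation for smeared fields:** for `f ∈ ℓ²`,
`[a(f), a†(f)] |n⟩ = ‖f‖² |n⟩` on every occupancy-number basis vector `|n⟩`. -/
theorem fock_ccr_smeared (f : ℕ → ℂ) (hf : Summable fun k => ‖f k‖ ^ 2) (n : ℕ →₀ ℕ) :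
    fockAnn f (fockCre f (fockBasis n)) - fockCre f (fockAnn f (fockBasis n)) =
      ((∑' k : ℕ, ‖f k‖ ^ 2 : ℝ) : ℂ) • fockBasis n := by
  funext m
  simp only [Pi.sub_apply, Pi.smul_apply, smul_eq_mul]
  rcases eq_or_ne m n with rfl | hmn
  · -- diagonal case (the occupancy config is named `m` here, `n` was substituted away)
    have hg2 : Summable (fun k => ‖f k‖ ^ 2 * (m k : ℝ)) := by
      apply summable_of_ne_finset_zero (s := m.support)
      intro k hk
      rw [Finsupp.notMem_support_iff.mp hk]
      simp
    have hg1 : Summable (fun k => ‖f k‖ ^ 2 * ((m k : ℝ) + 1)) := by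
      have he : (fun k => ‖f k‖ ^ 2 * ((m k : ℝ) + 1))
          = fun k => ‖f k‖ ^ 2 * (m k : ℝ) + ‖f k‖ ^ 2 := by funext k; ring
      rw [he]; exact hg2.add hf
    have hA : fockAnn f (fockCre f (fockBasis m)) m
        = ∑' k : ℕ, ((‖f k‖ ^ 2 * ((m k : ℝ) + 1) : ℝ) : ℂ) := by
      unfold fockAnn
      apply tsum_congr
      intro k
      rw [cre_basis_at]
      have hsq : (Real.sqrt ((m k : ℝ) + 1) : ℂ) * (Real.sqrt ((m k : ℝ) + 1) : ℂ)
          = (((m k : ℝ) + 1 : ℝ) : ℂ) := by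
        rw [← Complex.ofReal_mul, Real.mul_self_sqrt (by positivity)]
      calc (starRingEnd ℂ) (f k) * (Real.sqrt ((m k : ℝ) + 1) : ℂ)
            * (f k * (Real.sqrt ((m k : ℝ) + 1) : ℂ))
          = ((starRingEnd ℂ) (f k) * f k)
            * ((Real.sqrt ((m k : ℝ) + 1) : ℂ) * (Real.sqrt ((m k : ℝ) + 1) : ℂ)) := by ring
        _ = ((‖f k‖ ^ 2 : ℝ) : ℂ) * (((m k : ℝ) + 1 : ℝ) : ℂ) := by
            rw [← Complex.normSq_eq_conj_mul_self, hsq, Complex.normSq_eq_norm_sq]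
        _ = ((‖f k‖ ^ 2 * ((m k : ℝ) + 1) : ℝ) : ℂ) := by rw [← Complex.ofReal_mul]
    have hB : fockCre f (fockAnn f (fockBasis m)) m
        = ∑' k : ℕ, ((‖f k‖ ^ 2 * (m k : ℝ) : ℝ) : ℂ) := by
      unfold fockCre
      apply tsum_congr
      intro j
      by_cases h0 : m j = 0
      · rw [h0]; simp
      · rw [ann_basis_at f m j h0]
        have hsq : (Real.sqrt ((m j : ℝ)) : ℂ) * (Real.sqrt ((m j : ℝ)) : ℂ)
            = (((m j : ℝ) : ℝ) : ℂ) := by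
          rw [← Complex.ofReal_mul, Real.mul_self_sqrt (by positivity)]
        calc f j * (Real.sqrt ((m j : ℝ)) : ℂ)
              * ((starRingEnd ℂ) (f j) * (Real.sqrt ((m j : ℝ)) : ℂ))
            = ((starRingEnd ℂ) (f j) * f j)
              * ((Real.sqrt ((m j : ℝ)) : ℂ) * (Real.sqrt ((m j : ℝ)) : ℂ)) := by ring
          _ = ((‖f j‖ ^ 2 : ℝ) : ℂ) * (((m j : ℝ) : ℝ) : ℂ) := by
              rw [← Complex.normSq_eq_conj_mul_self, hsq, Complex.normSq_eq_norm_sq]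
          _ = ((‖f j‖ ^ 2 * (m j : ℝ) : ℝ) : ℂ) := by rw [← Complex.ofReal_mul]
    rw [hA, hB, ← Complex.ofReal_tsum, ← Complex.ofReal_tsum]
    have hbn : fockBasis m m = 1 := by simp [fockBasis]
    rw [hbn, mul_one, ← Complex.ofReal_sub]
    congr 1
    have hsum : ∑' k, ‖f k‖ ^ 2 * ((m k : ℝ) + 1)
        = (∑' k, ‖f k‖ ^ 2 * (m k : ℝ)) + ∑' k, ‖f k‖ ^ 2 := by
      rw [← Summable.tsum_add hg2 hf]
      apply tsum_congr; intro k; ring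
    rw [hsum]; ring
  · -- off-diagonal case
    have hbn : fockBasis n m = 0 := by simp [fockBasis, hmn]
    rw [hbn, mul_zero]
    by_cases hex : ∃ k j, m + Finsupp.single k 1 = n + Finsupp.single j 1
    · obtain ⟨k₀, j₀, hp⟩ := hex
      have hkj : k₀ ≠ j₀ := by rintro rfl; exact hmn (add_right_cancel hp)
      have hpt : ∀ i, m i + (if k₀ = i then 1 else 0) = n i + (if j₀ = i then 1 else 0) := by
        intro i
        have := (finsuppEq_iff _ _).mp hp i
        rwa [add_single_apply, add_single_apply] at this
      have hmj : m j₀ = n j₀ + 1 := by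
        have h := hpt j₀; rw [if_neg hkj, if_pos rfl] at h; omega
      have hmk : m k₀ + 1 = n k₀ := by
        have h := hpt k₀; rw [if_pos rfl, if_neg (Ne.symm hkj)] at h; omega
      have hA : fockAnn f (fockCre f (fockBasis n)) m
          = (starRingEnd ℂ) (f k₀) * (Real.sqrt ((m k₀ : ℝ) + 1) : ℂ)
            * (f j₀ * (Real.sqrt ((n j₀ : ℝ) + 1) : ℂ)) := by
        unfold fockAnn
        rw [tsum_eq_single k₀ ?_]
        · rw [hp, cre_basis_at]
        · intro k hk
          have hz : fockCre f (fockBasis n) (m + Finsupp.single k 1) = 0 := by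
            apply cre_basis_zero
            intro j hj
            rcases eq_or_ne k j with rfl | hkj2
            · exact hmn (add_right_cancel hj)
            · exact hk ((pair_unique hmn hj hp).1)
          rw [hz, mul_zero]
      have hB : fockCre f (fockAnn f (fockBasis n)) m
          = f j₀ * (Real.sqrt ((m j₀ : ℝ)) : ℂ)
            * ((starRingEnd ℂ) (f k₀) * (Real.sqrt ((n k₀ : ℝ)) : ℂ)) := by
        unfold fockCre
        rw [tsum_eq_single j₀ ?_]
        · rw [sub_eq_sub hkj hp, ann_basis_at f n k₀ (by omega)]
        · intro j hj
          by_cases h0 : m j = 0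
          · rw [h0]; simp
          · have hz : fockAnn f (fockBasis n) (m - Finsupp.single j 1) = 0 := by
              apply ann_basis_zero
              intro k hk
              have hj2 := sub_add_eq h0 hk
              rcases eq_or_ne k j with rfl | hkj2
              · exact hmn (add_right_cancel hj2)
              · exact hj ((pair_unique hmn hj2 hp).2)
            rw [hz, mul_zero]
      rw [hA, hB]
      have c1 : ((n k₀ : ℝ)) = (m k₀ : ℝ) + 1 := by exact_mod_cast hmk.symm
      have c2 : ((m j₀ : ℝ)) = (n j₀ : ℝ) + 1 := by exact_mod_cast hmj
      rw [c1, c2]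
      ring
    · push_neg at hex
      have hA : fockAnn f (fockCre f (fockBasis n)) m = 0 := by
        unfold fockAnn
        have hterm : ∀ k : ℕ, (starRingEnd ℂ) (f k) * (Real.sqrt ((m k : ℝ) + 1) : ℂ)
            * fockCre f (fockBasis n) (m + Finsupp.single k 1) = 0 := by
          intro k
          rw [cre_basis_zero f n _ (fun j => hex k j), mul_zero]
        calc _ = ∑' _ : ℕ, (0 : ℂ) := tsum_congr hterm
          _ = 0 := tsum_zero
      have hB : fockCre f (fockAnn f (fockBasis n)) m = 0 := by
        unfold fockCre
        have hterm : ∀ j : ℕ, f j * (Real.sqrt ((m j : ℝ)) : ℂ)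
            * fockAnn f (fockBasis n) (m - Finsupp.single j 1) = 0 := by
          intro j
          by_cases h0 : m j = 0
          · rw [h0]; simp
          · rw [ann_basis_zero f n _ ?_, mul_zero]
            intro k hk
            exact hex k j (sub_add_eq h0 hk)
        calc _ = ∑' _ : ℕ, (0 : ℂ) := tsum_congr hterm
          _ = 0 := tsum_zero
      rw [hA, hB, sub_zero]
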